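/- For every z, λ ∈ ℂ, the family ((conj(λ))^p · λ^q / (p! · q!)) · H_{p,q}(z), indexed by (p, q) ∈ ℕ², is absolutely summable and its sum equals exp(λ·conj(z) + conj(λ)·z − 2|λ|²), where H_{p,q}(z) := Σ_{k=0}^{min(p,q)} (−2)^k · k! · C(p,k) · C(q,k) · z^{p−k} · conj(z)^{q−k}. In particular H_{1,1}(z) = |z|² − 2, H_{1,2}(z) = conj(z)(|z|² − 4), and H_{2,2}(z) = |z|⁴ − 8|z|² + 8. -/

import Mathlib

/-- The complex Hermite (Hermite–Laguerre–Itô) polynomial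
`H_{p,q}(z) = Σ_{k=0}^{min(p,q)} (−2)^k k! C(p,k) C(q,k) z^{p−k} conj(z)^{q−k}`. -/
noncomputable def complexHermite (p q : ℕ) (z : ℂ) : ℂ :=
  ∑ k ∈ Finset.range (min p q + 1),
    (-2 : ℂ) ^ k * (k.factorial : ℂ) * (p.choose k : ℂ) * (q.choose k : ℂ)
      * z ^ (p - k) * (starRingEnd ℂ z) ^ (q - k)

namespace CHaux

noncomputable def G (z lam : ℂ) (x : (ℕ × ℕ) × ℕ) : ℂ :=
  (starRingEnd ℂ lam) ^ x.1.1 * lam ^ x.1.2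
    / ((x.1.1.factorial : ℂ) * (x.1.2.factorial : ℂ))
    * ((-2 : ℂ) ^ x.2 * (x.2.factorial : ℂ) * (x.1.1.choose x.2 : ℂ)
        * (x.1.2.choose x.2 : ℂ) * z ^ (x.1.1 - x.2) * (starRingEnd ℂ z) ^ (x.1.2 - x.2))

noncomputable def g (z lam : ℂ) (x : (ℕ × ℕ) × ℕ) : ℂ :=
  (starRingEnd ℂ lam * z) ^ x.1.1 / (x.1.1.factorial : ℂ)
    * ((lam * starRingEnd ℂ z) ^ x.1.2 / (x.1.2.factorial : ℂ))
    * ((-2 * (lam * starRingEnd ℂ lam)) ^ x.2 / (x.2.factorial : ℂ))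

def ι : (ℕ × ℕ) × ℕ → (ℕ × ℕ) × ℕ := fun x => ((x.1.1 + x.2, x.1.2 + x.2), x.2)

lemma ι_inj : Function.Injective ι := by
  rintro ⟨⟨a, b⟩, k⟩ ⟨⟨a', b'⟩, k'⟩ h
  have h1 := congrArg (fun x => x.1.1) h
  have h2 := congrArg (fun x => x.1.2) h
  have h3 := congrArg (fun x => x.2) h
  simp only [ι] at h1 h2 h3
  simp only [Prod.mk.injEq]
  omega

lemma G_eq_zero_of_not_mem {z lam : ℂ} {x : (ℕ × ℕ) × ℕ} (hx : x ∉ Set.range ι) :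
    G z lam x = 0 := by
  obtain ⟨⟨p, q⟩, k⟩ := x
  have : ¬ (k ≤ p ∧ k ≤ q) := by
    intro ⟨h1, h2⟩
    exact hx ⟨((p - k, q - k), k), by simp [ι]; omega⟩
  rcases not_and_or.mp this with h | h
  · simp [G, Nat.choose_eq_zero_of_lt (show p < k by omega)]
  · simp [G, Nat.choose_eq_zero_of_lt (show q < k by omega)]

lemma G_comp_ι (z lam : ℂ) (x : (ℕ × ℕ) × ℕ) : G z lam (ι x) = g z lam x := by
  obtain ⟨⟨a, b⟩, k⟩ := x
  simp only [G, g, ι, Nat.add_sub_cancel]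
  have ha : ((a + k).factorial : ℂ) = ((a + k).choose k : ℂ) * (k.factorial : ℂ) * (a.factorial : ℂ) := by
    rw [← Nat.choose_mul_factorial_mul_factorial (Nat.le_add_left k a)]
    push_cast [Nat.add_sub_cancel]
    ring
  have hb : ((b + k).factorial : ℂ) = ((b + k).choose k : ℂ) * (k.factorial : ℂ) * (b.factorial : ℂ) := by
    rw [← Nat.choose_mul_factorial_mul_factorial (Nat.le_add_left k b)]
    push_cast [Nat.add_sub_cancel]
    ring
  have hca : ((a + k).choose k : ℂ) ≠ 0 :=
    Nat.cast_ne_zero.mpr (Nat.choose_pos (Nat.le_add_left k a)).ne'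
  have hcb : ((b + k).choose k : ℂ) ≠ 0 :=
    Nat.cast_ne_zero.mpr (Nat.choose_pos (Nat.le_add_left k b)).ne'
  have hfa : (a.factorial : ℂ) ≠ 0 := Nat.cast_ne_zero.mpr a.factorial_ne_zero
  have hfb : (b.factorial : ℂ) ≠ 0 := Nat.cast_ne_zero.mpr b.factorial_ne_zero
  have hfk : (k.factorial : ℂ) ≠ 0 := Nat.cast_ne_zero.mpr k.factorial_ne_zero
  rw [ha, hb]
  field_simp
  ring

end CHaux

namespace CHaux

noncomputable def es (w : ℂ) (n : ℕ) : ℂ := w ^ n / (n.factorial : ℂ)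

lemma summable_norm_es (w : ℂ) : Summable (fun n : ℕ => ‖es w n‖) :=
  (Real.summable_pow_div_factorial ‖w‖).congr fun n => by
    rw [es, norm_div, norm_pow, Complex.norm_natCast]

lemma summable_es (w : ℂ) : Summable (es w) := (summable_norm_es w).of_norm

lemma tsum_es (w : ℂ) : ∑' n : ℕ, es w n = Complex.exp w := by
  rw [Complex.exp_eq_exp_ℂ, NormedSpace.exp_eq_tsum_div]
  rfl

lemma g_eq (z lam : ℂ) (x : (ℕ × ℕ) × ℕ) :
    g z lam x = es (starRingEnd ℂ lam * z) x.1.1 * es (lam * starRingEnd ℂ z) x.1.2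
      * es (-2 * (lam * starRingEnd ℂ lam)) x.2 := rfl

lemma summable_norm_g (z lam : ℂ) : Summable (fun x => ‖g z lam x‖) := by
  have h12 := (summable_norm_es (starRingEnd ℂ lam * z)).mul_of_nonneg
    (summable_norm_es (lam * starRingEnd ℂ z)) (fun n => norm_nonneg _) (fun n => norm_nonneg _)
  have h123 := h12.mul_of_nonneg (summable_norm_es (-2 * (lam * starRingEnd ℂ lam)))
    (fun x => mul_nonneg (norm_nonneg _) (norm_nonneg _)) (fun n => norm_nonneg _)
  refine h123.congr fun x => ?_
  rw [g_eq, norm_mul, norm_mul]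

lemma summable_g (z lam : ℂ) : Summable (g z lam) := (summable_norm_g z lam).of_norm

lemma tsum_g (z lam : ℂ) :
    ∑' x, g z lam x = Complex.exp (lam * starRingEnd ℂ z + starRingEnd ℂ lam * z
      - 2 * ((‖lam‖ : ℝ) : ℂ) ^ 2) := by
  have habs : ((‖lam‖ : ℝ) : ℂ) ^ 2 = lam * starRingEnd ℂ lam := by
    rw [← Complex.ofReal_pow, Complex.sq_norm, Complex.mul_conj]
  calc ∑' x, g z lam x
      = ∑' pq : ℕ × ℕ, ∑' k : ℕ, g z lam (pq, k) :=
        Summable.tsum_prod' (summable_g z lam) (fun pq =>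
          ((summable_es (-2 * (lam * starRingEnd ℂ lam))).mul_left
            (es (starRingEnd ℂ lam * z) pq.1 * es (lam * starRingEnd ℂ z) pq.2)).congr
            fun k => (g_eq z lam (pq, k)).symm)
    _ = ∑' pq : ℕ × ℕ, (es (starRingEnd ℂ lam * z) pq.1 * es (lam * starRingEnd ℂ z) pq.2)
          * Complex.exp (-2 * (lam * starRingEnd ℂ lam)) := by
        refine tsum_congr fun pq => ?_
        rw [show (fun k : ℕ => g z lam (pq, k))
            = fun k : ℕ => (es (starRingEnd ℂ lam * z) pq.1 * es (lam * starRingEnd ℂ z) pq.2)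
              * es (-2 * (lam * starRingEnd ℂ lam)) k from funext fun k => g_eq z lam (pq, k),
          tsum_mul_left, tsum_es]
    _ = (∑' pq : ℕ × ℕ, es (starRingEnd ℂ lam * z) pq.1 * es (lam * starRingEnd ℂ z) pq.2)
          * Complex.exp (-2 * (lam * starRingEnd ℂ lam)) := tsum_mul_right
    _ = (∑' a : ℕ, es (starRingEnd ℂ lam * z) a) * (∑' b : ℕ, es (lam * starRingEnd ℂ z) b)
          * Complex.exp (-2 * (lam * starRingEnd ℂ lam)) := by
        rw [← tsum_mul_tsum_of_summable_norm (summable_norm_es _) (summable_norm_es _)]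
    _ = Complex.exp (starRingEnd ℂ lam * z) * Complex.exp (lam * starRingEnd ℂ z)
          * Complex.exp (-2 * (lam * starRingEnd ℂ lam)) := by rw [tsum_es, tsum_es]
    _ = _ := by
        rw [← Complex.exp_add, ← Complex.exp_add]
        congr 1
        rw [habs]
        ring

lemma summable_norm_G (z lam : ℂ) : Summable (fun x => ‖G z lam x‖) := by
  rw [← Function.Injective.summable_iff ι_inj
    (f := fun x => ‖G z lam x‖)
    (fun x hx => by show ‖G z lam x‖ = 0; rw [G_eq_zero_of_not_mem hx, norm_zero])]
  exact (summable_norm_g z lam).congr fun x => by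
    show ‖g z lam x‖ = ‖G z lam (ι x)‖
    rw [G_comp_ι]

lemma summable_G (z lam : ℂ) : Summable (G z lam) := (summable_norm_G z lam).of_norm

lemma tsum_G (z lam : ℂ) : ∑' x, G z lam x = ∑' x, g z lam x := by
  rw [← Function.Injective.tsum_eq ι_inj (f := G z lam) (fun x hx => by
    by_contra h
    exact (Function.mem_support.mp hx) (G_eq_zero_of_not_mem h))]
  exact tsum_congr fun x => G_comp_ι z lam x

end CHaux

/-- For every `z, λ ∈ ℂ`, the family
`(conj(λ)^p λ^q / (p! q!)) H_{p,q}(z)`, indexed by `(p, q) ∈ ℕ²`, is absolutely summable and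
its sum equals `exp(λ conj(z) + conj(λ) z − 2|λ|²)`.  In particular,
`H_{1,1}(z) = |z|² − 2`, `H_{1,2}(z) = conj(z)(|z|² − 4)` and
`H_{2,2}(z) = |z|⁴ − 8|z|² + 8`. -/
theorem complexHermite_generating_function (z lam : ℂ) :
    Summable (fun pq : ℕ × ℕ =>
        ‖(starRingEnd ℂ lam) ^ pq.1 * lam ^ pq.2
            / ((pq.1.factorial : ℂ) * (pq.2.factorial : ℂ)) * complexHermite pq.1 pq.2 z‖)
      ∧ (∑' pq : ℕ × ℕ, (starRingEnd ℂ lam) ^ pq.1 * lam ^ pq.2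
            / ((pq.1.factorial : ℂ) * (pq.2.factorial : ℂ)) * complexHermite pq.1 pq.2 z)
          = Complex.exp (lam * starRingEnd ℂ z + starRingEnd ℂ lam * z
              - 2 * ((‖lam‖ : ℝ) : ℂ) ^ 2)
      ∧ complexHermite 1 1 z = ((‖z‖ : ℝ) : ℂ) ^ 2 - 2
      ∧ complexHermite 1 2 z = starRingEnd ℂ z * (((‖z‖ : ℝ) : ℂ) ^ 2 - 4)
      ∧ complexHermite 2 2 z
          = ((‖z‖ : ℝ) : ℂ) ^ 4 - 8 * ((‖z‖ : ℝ) : ℂ) ^ 2 + 8 := by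
  have hT : ∀ pq : ℕ × ℕ,
      (starRingEnd ℂ lam) ^ pq.1 * lam ^ pq.2
          / ((pq.1.factorial : ℂ) * (pq.2.factorial : ℂ)) * complexHermite pq.1 pq.2 z
        = ∑' k : ℕ, CHaux.G z lam (pq, k) := by
    intro pq
    have h0 : ∀ k ∉ Finset.range (min pq.1 pq.2 + 1), CHaux.G z lam (pq, k) = 0 := by
      intro k hk
      rw [Finset.mem_range] at hk
      rcases (show pq.1 < k ∨ pq.2 < k by omega) with h | h
      · simp [CHaux.G, Nat.choose_eq_zero_of_lt h]
      · simp [CHaux.G, Nat.choose_eq_zero_of_lt h]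
    rw [tsum_eq_sum h0, complexHermite, Finset.mul_sum]
    exact Finset.sum_congr rfl fun k _ => by simp only [CHaux.G]; try ring
  have hGn := CHaux.summable_norm_G z lam
  have hS : Summable (fun pq : ℕ × ℕ => ∑' k : ℕ, ‖CHaux.G z lam (pq, k)‖) :=
    (hGn.hasSum.prod_fiberwise (fun pq => (hGn.prod_factor pq).hasSum)).summable
  have hzz : z * starRingEnd ℂ z = ((‖z‖ : ℝ) : ℂ) ^ 2 := by
    rw [Complex.mul_conj, ← Complex.ofReal_pow, Complex.sq_norm]
  refine ⟨?_, ?_, ?_, ?_, ?_⟩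
  · refine Summable.of_nonneg_of_le (fun pq => norm_nonneg _) (fun pq => ?_) hS
    rw [hT pq]
    exact norm_tsum_le_tsum_norm (hGn.prod_factor pq)
  · calc (∑' pq : ℕ × ℕ, (starRingEnd ℂ lam) ^ pq.1 * lam ^ pq.2
            / ((pq.1.factorial : ℂ) * (pq.2.factorial : ℂ)) * complexHermite pq.1 pq.2 z)
        = ∑' pq : ℕ × ℕ, ∑' k : ℕ, CHaux.G z lam (pq, k) := tsum_congr hT
      _ = ∑' x : (ℕ × ℕ) × ℕ, CHaux.G z lam x :=
        (Summable.tsum_prod' (CHaux.summable_G z lam)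
          (fun pq => (CHaux.summable_G z lam).prod_factor pq)).symm
      _ = ∑' x : (ℕ × ℕ) × ℕ, CHaux.g z lam x := CHaux.tsum_G z lam
      _ = _ := CHaux.tsum_g z lam
  · rw [← hzz]
    simp [complexHermite, Finset.sum_range_succ]
    ring
  · rw [← hzz]
    simp [complexHermite, Finset.sum_range_succ]
    ring
  · have key : complexHermite 2 2 z
        = (z * starRingEnd ℂ z) ^ 2 - 8 * (z * starRingEnd ℂ z) + 8 := by
      simp [complexHermite, Finset.sum_range_succ]
      ring
    rw [key, hzz]
    ring
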